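/- Let R be a commutative local ring with s ∈ R. A matrix A ∈ M₂(R;s) is strongly J-clean if and only if A ∈ J(M₂(R;s)), or I₂ - A ∈ J(M₂(R;s)), or the s-characteristic polynomial t² - tr(A)·t + det_s(A) has a root in J(R) and a root in 1 + J(R). -/

import Mathlib

/-- The formal matrix ring `M₂(R;s)`: 2×2 matrices over `R` recorded by their four
entries, with the twisted multiplication
`[[a,b],[c,d]]·[[a',b'],[c',d']] = [[aa'+s²bc', ab'+bd'],[ca'+dc', s²cb'+dd']]`. -/
@[ext]
structure FM (R : Type*) (s : R) : Type _ where
  a : R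
  b : R
  c : R
  d : R

namespace FM

variable {R : Type*} [Ring R] {s : R}

instance : Zero (FM R s) := ⟨⟨0, 0, 0, 0⟩⟩
instance : One (FM R s) := ⟨⟨1, 0, 0, 1⟩⟩
instance : Add (FM R s) := ⟨fun x y => ⟨x.a + y.a, x.b + y.b, x.c + y.c, x.d + y.d⟩⟩
instance : Neg (FM R s) := ⟨fun x => ⟨-x.a, -x.b, -x.c, -x.d⟩⟩
instance : Mul (FM R s) :=
  ⟨fun x y => ⟨x.a * y.a + s * s * (x.b * y.c), x.a * y.b + x.b * y.d,
    x.c * y.a + x.d * y.c, s * s * (x.c * y.b) + x.d * y.d⟩⟩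

@[simp] lemma zero_a : (0 : FM R s).a = 0 := rfl
@[simp] lemma zero_b : (0 : FM R s).b = 0 := rfl
@[simp] lemma zero_c : (0 : FM R s).c = 0 := rfl
@[simp] lemma zero_d : (0 : FM R s).d = 0 := rfl
@[simp] lemma one_a : (1 : FM R s).a = 1 := rfl
@[simp] lemma one_b : (1 : FM R s).b = 0 := rfl
@[simp] lemma one_c : (1 : FM R s).c = 0 := rfl
@[simp] lemma one_d : (1 : FM R s).d = 1 := rfl
@[simp] lemma add_a (x y : FM R s) : (x + y).a = x.a + y.a := rfl
@[simp] lemma add_b (x y : FM R s) : (x + y).b = x.b + y.b := rfl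
@[simp] lemma add_c (x y : FM R s) : (x + y).c = x.c + y.c := rfl
@[simp] lemma add_d (x y : FM R s) : (x + y).d = x.d + y.d := rfl
@[simp] lemma neg_a (x : FM R s) : (-x).a = -x.a := rfl
@[simp] lemma neg_b (x : FM R s) : (-x).b = -x.b := rfl
@[simp] lemma neg_c (x : FM R s) : (-x).c = -x.c := rfl
@[simp] lemma neg_d (x : FM R s) : (-x).d = -x.d := rfl
@[simp] lemma mul_a (x y : FM R s) : (x * y).a = x.a * y.a + s * s * (x.b * y.c) := rfl
@[simp] lemma mul_b (x y : FM R s) : (x * y).b = x.a * y.b + x.b * y.d := rfl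
@[simp] lemma mul_c (x y : FM R s) : (x * y).c = x.c * y.a + x.d * y.c := rfl
@[simp] lemma mul_d (x y : FM R s) : (x * y).d = s * s * (x.c * y.b) + x.d * y.d := rfl

instance : AddCommGroup (FM R s) where
  add_assoc x y z := by ext <;> simp [add_assoc]
  zero_add x := by ext <;> simp
  add_zero x := by ext <;> simp
  add_comm x y := by ext <;> simp [add_comm]
  neg_add_cancel x := by ext <;> simp
  nsmul := nsmulRec
  zsmul := zsmulRec

/-- When `s` is central in `R`, `M₂(R;s)` is a ring. -/
instance [hs : Fact (∀ x : R, s * x = x * s)] : Ring (FM R s) where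
  __ := (inferInstance : AddCommGroup (FM R s))
  mul := (· * ·)
  one := 1
  mul_assoc x y z := by
    have hc : ∀ u v : R, u * (s * v) = s * (u * v) := fun u v => by
      rw [← mul_assoc, ← hs.out u, mul_assoc]
    ext <;> simp only [mul_a, mul_b, mul_c, mul_d, mul_add, add_mul, mul_assoc, hc] <;> abel
  one_mul x := by ext <;> simp
  mul_one x := by ext <;> simp
  left_distrib x y z := by ext <;> simp [mul_add, add_mul] <;> abel
  right_distrib x y z := by ext <;> simp [mul_add, add_mul] <;> abel
  zero_mul x := by ext <;> simp
  mul_zero x := by ext <;> simp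

/-- In a commutative ring every element is central. -/
instance (priority := 100) {R : Type*} [CommRing R] (s : R) : Fact (∀ x : R, s * x = x * s) :=
  ⟨fun x => mul_comm s x⟩

end FM

/-- An element is strongly J-clean if it is the sum of an idempotent and an element of
the Jacobson radical which commute. -/
def IsStronglyJClean {A : Type*} [Ring A] (x : A) : Prop :=
  ∃ e : A, IsIdempotentElem e ∧ x * e = e * x ∧ x - e ∈ (⊥ : Ideal A).jacobson

/-- An element is strongly clean if it is the sum of an idempotent and a unit
which commute. -/
def IsStronglyClean {A : Type*} [Ring A] (x : A) : Prop :=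
  ∃ e : A, IsIdempotentElem e ∧ x * e = e * x ∧ IsUnit (x - e)

/-- An element is strongly nil clean if it is the sum of an idempotent and a nilpotent
which commute. -/
def IsStronglyNilClean {A : Type*} [Ring A] (x : A) : Prop :=
  ∃ e : A, IsIdempotentElem e ∧ x * e = e * x ∧ IsNilpotent (x - e)


/-- The `s`-determinant of a formal matrix. -/
def FM.dets {R : Type*} [CommRing R] {s : R} (A : FM R s) : R :=
  A.a * A.d - s * s * (A.b * A.c)

section Aux

variable {R : Type*} [CommRing R] {s : R}

namespace FM

@[simp] lemma sub_a (x y : FM R s) : (x - y).a = x.a - y.a := by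
  rw [sub_eq_add_neg, add_a, neg_a, ← sub_eq_add_neg]
@[simp] lemma sub_b (x y : FM R s) : (x - y).b = x.b - y.b := by
  rw [sub_eq_add_neg, add_b, neg_b, ← sub_eq_add_neg]
@[simp] lemma sub_c (x y : FM R s) : (x - y).c = x.c - y.c := by
  rw [sub_eq_add_neg, add_c, neg_c, ← sub_eq_add_neg]
@[simp] lemma sub_d (x y : FM R s) : (x - y).d = x.d - y.d := by
  rw [sub_eq_add_neg, add_d, neg_d, ← sub_eq_add_neg]

lemma dets_mul (x y : FM R s) : (x * y).dets = x.dets * y.dets := by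
  simp only [FM.dets, mul_a, mul_b, mul_c, mul_d]; ring

lemma dets_one : (1 : FM R s).dets = 1 := by simp [FM.dets]

lemma isUnit_of_isUnit_dets (x : FM R s) (h : IsUnit x.dets) : IsUnit x := by
  obtain ⟨u, hu⟩ := h.exists_right_inv
  simp only [FM.dets] at hu
  refine ⟨⟨x, ⟨u * x.d, -(u * x.b), -(u * x.c), u * x.a⟩, ?_, ?_⟩, rfl⟩ <;>
    · ext <;> simp <;> first | linear_combination hu | linear_combination -hu | ring

variable [IsLocalRing R]

lemma isUnit_one_add {x : R} (h : x ∈ (⊥ : Ideal R).jacobson) : IsUnit (1 + x) := by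
  rw [IsLocalRing.jacobson_eq_maximalIdeal ⊥ bot_ne_top] at h
  have h2 : -x ∈ IsLocalRing.maximalIdeal R := neg_mem h
  have := IsLocalRing.isUnit_one_sub_self_of_mem_nonunits (-x)
    ((IsLocalRing.mem_maximalIdeal _).1 h2)
  simpa [sub_neg_eq_add] using this

lemma mem_jacobson_iff' (Z : FM R s) :
    Z ∈ (⊥ : Ideal (FM R s)).jacobson ↔
      Z.a ∈ (⊥ : Ideal R).jacobson ∧ Z.d ∈ (⊥ : Ideal R).jacobson ∧
      s * s * Z.b ∈ (⊥ : Ideal R).jacobson ∧ s * s * Z.c ∈ (⊥ : Ideal R).jacobson := by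
  constructor
  · intro h
    have key : ∀ Y : FM R s, IsUnit ((Y * Z + 1).dets) := by
      intro Y
      obtain ⟨C, hC⟩ := Ideal.mem_jacobson_iff.1 h Y
      rw [Ideal.mem_bot, sub_eq_zero] at hC
      have h1 : C * (Y * Z + 1) = 1 := by rw [mul_add, mul_one, ← mul_assoc]; exact hC
      have h2 := congrArg FM.dets h1
      rw [dets_mul, dets_one] at h2
      exact IsUnit.of_mul_eq_one _ (by rw [mul_comm]; exact h2)
    refine ⟨?_, ?_, ?_, ?_⟩ <;> rw [Ideal.mem_jacobson_bot] <;> intro y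
    · have e1 : (((⟨y, 0, 0, 0⟩ : FM R s)) * Z + 1).dets = Z.a * y + 1 := by
        simp [FM.dets]; ring
      rw [← e1]; exact key _
    · have e1 : (((⟨0, 0, 0, y⟩ : FM R s)) * Z + 1).dets = Z.d * y + 1 := by
        simp [FM.dets]; ring
      rw [← e1]; exact key _
    · have e1 : (((⟨0, 0, y, 0⟩ : FM R s)) * Z + 1).dets = s * s * Z.b * y + 1 := by
        simp [FM.dets]; ring
      rw [← e1]; exact key _
    · have e1 : (((⟨0, y, 0, 0⟩ : FM R s)) * Z + 1).dets = s * s * Z.c * y + 1 := by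
        simp [FM.dets]; ring
      rw [← e1]; exact key _
  · rintro ⟨h1, h2, h3, h4⟩
    rw [Ideal.mem_jacobson_iff]
    intro Y
    have hd : (Y * Z + 1).dets - 1 ∈ (⊥ : Ideal R).jacobson := by
      have e : (Y * Z + 1).dets - 1 =
          Z.a * (Y.a * Y.d * Z.d + Y.a - s * s * (Y.b * Z.d * Y.c)) + Z.d * Y.d +
          (s * s * Z.b) * (s * s * (Y.b * Z.c * Y.c) + Y.c) +
          (s * s * Z.c) * (Y.b - Y.a * Z.b * Y.d) := by
        simp [FM.dets]; ring
      rw [e]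
      exact add_mem (add_mem (add_mem (Ideal.mul_mem_right _ _ h1)
        (Ideal.mul_mem_right _ _ h2)) (Ideal.mul_mem_right _ _ h3))
        (Ideal.mul_mem_right _ _ h4)
    have hu : IsUnit ((Y * Z + 1).dets) := by
      have := isUnit_one_add hd
      have e2 : (1 : R) + ((Y * Z + 1).dets - 1) = (Y * Z + 1).dets := by ring
      rwa [e2] at this
    obtain ⟨u, hu2⟩ := isUnit_of_isUnit_dets _ hu
    refine ⟨↑u⁻¹, ?_⟩
    rw [Ideal.mem_bot, sub_eq_zero]
    calc (↑u⁻¹ : FM R s) * Y * Z + ↑u⁻¹ = ↑u⁻¹ * (Y * Z + 1) := by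
          rw [mul_add, mul_one, mul_assoc]
      _ = 1 := by rw [← hu2, Units.inv_mul]

lemma jac_mul_right {Z : FM R s} (X : FM R s)
    (h : Z ∈ (⊥ : Ideal (FM R s)).jacobson) :
    Z * X ∈ (⊥ : Ideal (FM R s)).jacobson := by
  rw [mem_jacobson_iff'] at h ⊢
  obtain ⟨h1, h2, h3, h4⟩ := h
  refine ⟨?_, ?_, ?_, ?_⟩
  · have e : (Z * X).a = Z.a * X.a + (s * s * Z.b) * X.c := by simp; ring
    rw [e]; exact add_mem (Ideal.mul_mem_right _ _ h1) (Ideal.mul_mem_right _ _ h3)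
  · have e : (Z * X).d = (s * s * Z.c) * X.b + Z.d * X.d := by simp; ring
    rw [e]; exact add_mem (Ideal.mul_mem_right _ _ h4) (Ideal.mul_mem_right _ _ h2)
  · have e : s * s * (Z * X).b = Z.a * (s * s * X.b) + (s * s * Z.b) * X.d := by simp; ring
    rw [e]; exact add_mem (Ideal.mul_mem_right _ _ h1) (Ideal.mul_mem_right _ _ h3)
  · have e : s * s * (Z * X).c = (s * s * Z.c) * X.a + Z.d * (s * s * X.c) := by simp; ring
    rw [e]; exact add_mem (Ideal.mul_mem_right _ _ h4) (Ideal.mul_mem_right _ _ h2)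

end FM

end Aux
section Aux2

variable {R : Type*} [CommRing R] [IsLocalRing R] {s : R}

namespace FM

lemma idem_classify {E : FM R s} (hE : E * E = E) (h0 : E ≠ 0) (h1 : E ≠ 1) :
    E.a + E.d = 1 ∧ E.a * E.d - s * s * (E.b * E.c) = 0 := by
  have ha := congrArg FM.a hE; rw [mul_a] at ha
  have hb := congrArg FM.b hE; rw [mul_b] at hb
  have hc := congrArg FM.c hE; rw [mul_c] at hc
  have hd := congrArg FM.d hE; rw [mul_d] at hd
  obtain ⟨u, hu'⟩ : ∃ u : R, u = E.a + E.d - 1 := ⟨_, rfl⟩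
  obtain ⟨ε, hε'⟩ : ∃ ε : R, ε = E.a * E.d - s * s * (E.b * E.c) := ⟨_, rfl⟩
  have k1 : u * E.b = 0 := by linear_combination hb + E.b * hu'
  have k2 : u * E.c = 0 := by linear_combination hc + E.c * hu'
  have k3 : u * E.a = ε := by linear_combination ha + E.a * hu' - hε'
  have k4 : u * E.d = ε := by linear_combination hd + E.d * hu' - hε'
  have hεε : ε * ε = ε := by
    have h2 := dets_mul E E
    rw [hE] at h2
    simp only [FM.dets] at h2
    linear_combination -h2 + (E.a * E.d - s * s * (E.b * E.c) + ε - 1) * hε'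
  rcases IsLocalRing.isUnit_or_isUnit_of_add_one (a := ε) (b := 1 - ε) (by ring) with hu1 | hu1
  · exfalso
    have hε1 : ε = 1 := hu1.mul_left_cancel (by rw [mul_one]; exact hεε)
    have huu : IsUnit u := IsUnit.of_mul_eq_one (a := u) E.a (by rw [k3, hε1])
    have hbz : E.b = 0 := huu.mul_left_cancel (by rw [mul_zero]; exact k1)
    have hcz : E.c = 0 := huu.mul_left_cancel (by rw [mul_zero]; exact k2)
    have hue : u * E.a = 1 := by rw [k3, hε1]
    have he1 : E.a = 1 := by
      have hee : E.a * E.a = E.a := by rw [hbz] at ha; linear_combination ha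
      have h3 : u * (E.a * E.a) = u * E.a := by rw [hee]
      rwa [← mul_assoc, hue, one_mul] at h3
    have hf1 : E.d = 1 := by
      have huf : u * E.d = 1 := by rw [k4, hε1]
      have hff : E.d * E.d = E.d := by rw [hcz] at hd; linear_combination hd
      have h3 : u * (E.d * E.d) = u * E.d := by rw [hff]
      rwa [← mul_assoc, huf, one_mul] at h3
    exact h1 (by ext <;> simp [he1, hf1, hbz, hcz])
  · have hε0 : ε = 0 := hu1.mul_right_cancel (by rw [zero_mul]; linear_combination -hεε)
    rw [hε0] at k3 k4
    have huu1 : u * (1 + u) = 0 := by linear_combination k3 + k4 + u * hu'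
    rcases IsLocalRing.isUnit_or_isUnit_of_add_one (a := -u) (b := 1 + u) (by ring)
      with hu2 | hu2
    · exfalso
      have huu : IsUnit u := by simpa using hu2.neg
      have he0 : E.a = 0 := huu.mul_left_cancel (by rw [mul_zero]; exact k3)
      have hf0 : E.d = 0 := huu.mul_left_cancel (by rw [mul_zero]; exact k4)
      have hb0 : E.b = 0 := huu.mul_left_cancel (by rw [mul_zero]; exact k1)
      have hc0 : E.c = 0 := huu.mul_left_cancel (by rw [mul_zero]; exact k2)
      exact h0 (by ext <;> simp [he0, hf0, hb0, hc0])
    · have hz : u = 0 := hu2.mul_right_cancel (by rw [zero_mul]; exact huu1)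
      exact ⟨by linear_combination hz - hu', by linear_combination hε0 - hε'⟩

lemma diagonalize {E A : FM R s} (hE : E * E = E) (htr : E.a + E.d = 1)
    (hdet : E.a * E.d - s * s * (E.b * E.c) = 0) (hu : IsUnit E.a)
    (hAE : A * E = E * A) :
    ∃ U V : FM R s, U * V = 1 ∧ V * U = 1 ∧ V * E * U = ⟨1, 0, 0, 0⟩ ∧
      (V * A * U).b = 0 ∧ (V * A * U).c = 0 ∧
      (V * A * U).a + (V * A * U).d = A.a + A.d ∧
      (V * A * U).a * (V * A * U).d = A.dets := by
  have ha := congrArg FM.a hE; rw [mul_a] at ha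
  have hb := congrArg FM.b hE; rw [mul_b] at hb
  have hc := congrArg FM.c hE; rw [mul_c] at hc
  have hd := congrArg FM.d hE; rw [mul_d] at hd
  obtain ⟨v, hv⟩ := hu.exists_right_inv
  set U : FM R s := ⟨E.a, -E.b, E.c, E.a⟩ with hU'
  set V : FM R s := ⟨v * E.a, v * E.b, -(v * E.c), v * E.a⟩ with hV'
  have hUV : U * V = 1 := by
    ext <;> simp [hU', hV'] <;>
      first
        | linear_combination v * ha + hv
        | linear_combination (-v) * ha - hv
        | ring
  have hVU : V * U = 1 := by
    ext <;> simp [hU', hV'] <;>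
      first
        | linear_combination v * ha + hv
        | linear_combination (-v) * ha - hv
        | ring
  have hEU : E * U = U * (⟨1, 0, 0, 0⟩ : FM R s) := by
    ext <;> simp [hU'] <;>
      first
        | linear_combination ha
        | linear_combination -ha
        | linear_combination hc
        | linear_combination -hc
        | linear_combination hdet
        | linear_combination -hdet
        | ring
  have hVEU : V * E * U = (⟨1, 0, 0, 0⟩ : FM R s) := by
    rw [mul_assoc, hEU, ← mul_assoc, hVU, one_mul]
  have h5 : (V * A * U) * (V * E * U) = (V * E * U) * (V * A * U) := by
    have l1 : (V * A * U) * (V * E * U) = V * (A * (U * V) * E) * U := by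
      simp only [mul_assoc]
    have l2 : (V * E * U) * (V * A * U) = V * (E * (U * V) * A) * U := by
      simp only [mul_assoc]
    rw [l1, l2, hUV, mul_one, mul_one, hAE]
  rw [hVEU] at h5
  obtain ⟨X, hX⟩ : ∃ X : FM R s, X = V * A * U := ⟨_, rfl⟩
  rw [← hX] at h5
  have hb0 : (V * A * U).b = 0 := by
    have h6 := congrArg FM.b h5
    simp at h6
    rw [← hX]
    exact h6.symm
  have hc0 : (V * A * U).c = 0 := by
    have h6 := congrArg FM.c h5
    simp at h6
    rw [← hX]
    exact h6
  have t1 : ∀ X Y : FM R s, (X * Y).a + (X * Y).d = (Y * X).a + (Y * X).d := by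
    intro X Y; simp; ring
  have htrA : (V * A * U).a + (V * A * U).d = A.a + A.d := by
    calc (V * A * U).a + (V * A * U).d
        = (U * (V * A)).a + (U * (V * A)).d := t1 (V * A) U
      _ = ((U * V) * A).a + ((U * V) * A).d := by rw [mul_assoc]
      _ = A.a + A.d := by rw [hUV, one_mul]
  have hdetsA : (V * A * U).a * (V * A * U).d = A.dets := by
    have d2 : V.dets * U.dets = 1 := by
      have := congrArg FM.dets hVU
      rwa [dets_mul, dets_one] at this
    have d1 : (V * A * U).dets = A.dets := by
      rw [dets_mul, dets_mul]
      linear_combination A.dets * d2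
    have d3 : (V * A * U).a * (V * A * U).d = (V * A * U).dets := by
      simp [FM.dets, hb0]
    rw [d3, d1]
  exact ⟨U, V, hUV, hVU, hVEU, hb0, hc0, htrA, hdetsA⟩

end FM

end Aux2

theorem stmt19 {R : Type*} [CommRing R] [IsLocalRing R] (s : R) (A : FM R s) :
    IsStronglyJClean A ↔
      A ∈ (⊥ : Ideal (FM R s)).jacobson ∨ 1 - A ∈ (⊥ : Ideal (FM R s)).jacobson ∨
        ∃ x y : R, x ∈ (⊥ : Ideal R).jacobson ∧ y - 1 ∈ (⊥ : Ideal R).jacobson ∧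
          x ^ 2 - (A.a + A.d) * x + A.dets = 0 ∧ y ^ 2 - (A.a + A.d) * y + A.dets = 0 := by
  classical
  constructor
  · rintro ⟨E, hidem, hcomm, hmem⟩
    have hE : E * E = E := hidem
    by_cases h0 : E = 0
    · left; subst h0; rwa [sub_zero] at hmem
    by_cases h1 : E = 1
    · right; left; subst h1
      have h2 := neg_mem hmem
      rwa [neg_sub] at h2
    right; right
    obtain ⟨htr, hdet⟩ := FM.idem_classify hE h0 h1
    rcases IsLocalRing.isUnit_or_isUnit_of_add_one htr with hua | hud
    · obtain ⟨U, V, hUV, hVU, hVEU, hb0, hc0, htrA, hdetA⟩ :=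
        FM.diagonalize hE htr hdet hua hcomm
      obtain ⟨X, hX⟩ : ∃ X : FM R s, X = V * A * U := ⟨_, rfl⟩
      rw [← hX] at htrA hdetA
      have hW : V * (A - E) * U ∈ (⊥ : Ideal (FM R s)).jacobson :=
        FM.jac_mul_right U (Ideal.mul_mem_left _ V hmem)
      have hsplit : V * (A - E) * U = X - ⟨1, 0, 0, 0⟩ := by
        rw [mul_sub, sub_mul, hVEU, ← hX]
      rw [hsplit, FM.mem_jacobson_iff'] at hW
      obtain ⟨hWa, hWd, -, -⟩ := hW
      have hWa' : X.a - 1 ∈ (⊥ : Ideal R).jacobson := by simpa using hWa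
      have hWd' : X.d ∈ (⊥ : Ideal R).jacobson := by simpa using hWd
      refine ⟨X.d, X.a, hWd', hWa', ?_, ?_⟩
      · linear_combination X.d * htrA - hdetA
      · linear_combination X.a * htrA - hdetA
    · have hE1 : (1 - E) * (1 - E) = 1 - E := (IsIdempotentElem.one_sub hidem)
      have htr' : (1 - E).a + (1 - E).d = 1 := by simp; linear_combination -htr
      have hdet' : (1 - E).a * (1 - E).d - s * s * ((1 - E).b * (1 - E).c) = 0 := by
        simp; linear_combination hdet - htr
      have hu' : IsUnit (1 - E).a := by
        have e1 : (1 - E).a = E.d := by simp; linear_combination -htr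
        rwa [e1]
      have hAE' : A * (1 - E) = (1 - E) * A := by
        rw [mul_sub, sub_mul, mul_one, one_mul, hcomm]
      obtain ⟨U, V, hUV, hVU, hVEU, hb0, hc0, htrA, hdetA⟩ :=
        FM.diagonalize hE1 htr' hdet' hu' hAE'
      obtain ⟨X, hX⟩ : ∃ X : FM R s, X = V * A * U := ⟨_, rfl⟩
      rw [← hX] at htrA hdetA
      have hVEU2 : V * E * U = 1 - (⟨1, 0, 0, 0⟩ : FM R s) := by
        conv_lhs => rw [← sub_sub_cancel 1 E]
        rw [mul_sub, mul_one, sub_mul, hVU, hVEU]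
      have hW : V * (A - E) * U ∈ (⊥ : Ideal (FM R s)).jacobson :=
        FM.jac_mul_right U (Ideal.mul_mem_left _ V hmem)
      have hsplit : V * (A - E) * U = X - (1 - ⟨1, 0, 0, 0⟩) := by
        rw [mul_sub, sub_mul, hVEU2, ← hX]
      rw [hsplit, FM.mem_jacobson_iff'] at hW
      obtain ⟨hWa, hWd, -, -⟩ := hW
      have hWa' : X.a ∈ (⊥ : Ideal R).jacobson := by simpa using hWa
      have hWd' : X.d - 1 ∈ (⊥ : Ideal R).jacobson := by simpa using hWd
      refine ⟨X.a, X.d, hWa', hWd', ?_, ?_⟩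
      · linear_combination X.a * htrA - hdetA
      · linear_combination X.d * htrA - hdetA
  · rintro (h | h | ⟨x, y, hx, hy, hxe, hye⟩)
    · exact ⟨0, IsIdempotentElem.zero, by rw [mul_zero, zero_mul], by rwa [sub_zero]⟩
    · refine ⟨1, IsIdempotentElem.one, by rw [mul_one, one_mul], ?_⟩
      have h2 := neg_mem h
      rwa [neg_sub] at h2
    · have hxe' : x ^ 2 - (A.a + A.d) * x + (A.a * A.d - s * s * (A.b * A.c)) = 0 := by
        simp only [FM.dets] at hxe; exact hxe
      have hδ : A.dets ∈ (⊥ : Ideal R).jacobson := by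
        have e : A.dets = ((A.a + A.d) - x) * x := by linear_combination hxe
        rw [e]; exact Ideal.mul_mem_left _ _ hx
      have hτ : (A.a + A.d) - 1 ∈ (⊥ : Ideal R).jacobson := by
        have e : (A.a + A.d) - 1 = (y - 1) * (y - (A.a + A.d)) + A.dets + (y - 1) := by
          linear_combination -hye
        rw [e]
        exact add_mem (add_mem (Ideal.mul_mem_right _ _ hy) hδ) hy
      have hg1 : ((A.a + A.d) - 2 * x) - 1 ∈ (⊥ : Ideal R).jacobson := by
        have e : ((A.a + A.d) - 2 * x) - 1 = ((A.a + A.d) - 1) - 2 * x := by ring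
        rw [e]; exact sub_mem hτ (Ideal.mul_mem_left _ _ hx)
      have hg : IsUnit ((A.a + A.d) - 2 * x) := by
        have h2 := FM.isUnit_one_add hg1
        have e : (1 : R) + (((A.a + A.d) - 2 * x) - 1) = (A.a + A.d) - 2 * x := by ring
        rwa [e] at h2
      obtain ⟨u, hug⟩ := hg.exists_right_inv
      have h1u : 1 - u ∈ (⊥ : Ideal R).jacobson := by
        have e : 1 - u = u * (((A.a + A.d) - 2 * x) - 1) := by linear_combination -hug
        rw [e]; exact Ideal.mul_mem_left _ _ hg1
      refine ⟨⟨u * (A.a - x), u * A.b, u * A.c, u * (A.d - x)⟩, ?_, ?_, ?_⟩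
      · show _ * _ = _
        ext <;> simp <;>
          first
            | linear_combination (A.a - x) * u * hug - u * u * hxe'
            | linear_combination (A.d - x) * u * hug - u * u * hxe'
            | linear_combination A.b * u * hug
            | linear_combination A.c * u * hug
            | linear_combination (x - A.a) * u * hug + u * u * hxe'
            | linear_combination (x - A.d) * u * hug + u * u * hxe'
            | linear_combination (-(A.b * u)) * hug
            | linear_combination (-(A.c * u)) * hug
            | ring
      · ext <;> simp <;> ring
      · rw [FM.mem_jacobson_iff']
        refine ⟨?_, ?_, ?_, ?_⟩
        · have e : (A - (⟨u * (A.a - x), u * A.b, u * A.c, u * (A.d - x)⟩ : FM R s)).a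
              = A.a * (1 - u) + u * x := by simp; ring
          rw [e]
          exact add_mem (Ideal.mul_mem_left _ _ h1u) (Ideal.mul_mem_left _ _ hx)
        · have e : (A - (⟨u * (A.a - x), u * A.b, u * A.c, u * (A.d - x)⟩ : FM R s)).d
              = A.d * (1 - u) + u * x := by simp; ring
          rw [e]
          exact add_mem (Ideal.mul_mem_left _ _ h1u) (Ideal.mul_mem_left _ _ hx)
        · have e : s * s * (A - (⟨u * (A.a - x), u * A.b, u * A.c, u * (A.d - x)⟩ : FM R s)).b
              = (s * s * A.b) * (1 - u) := by simp; ring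
          rw [e]
          exact Ideal.mul_mem_left _ _ h1u
        · have e : s * s * (A - (⟨u * (A.a - x), u * A.b, u * A.c, u * (A.d - x)⟩ : FM R s)).c
              = (s * s * A.c) * (1 - u) := by simp; ring
          rw [e]
          exact Ideal.mul_mem_left _ _ h1u
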